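/- Proposition 2 (alignment with ETF prototypes): if the prototypes w_1, …, w_k form a simplex equiangular tight frame, then for every label y ∈ {1,…,k} and every h ∈ E with ‖h‖ ≤ 1, one has L_y(h) ≥ L_y(w_y); that is, the prototype w_y is a global minimizer of the limiting per-sample loss over the closed unit ball. -/

import Mathlib

open scoped RealInnerProductSpace

/-- The limiting per-sample loss
`L_y(h) = log( Σ_c exp⟪w_c, h⟫ ) − 2⟪w_y, h⟫`. -/
noncomputable def limitLoss {d k : ℕ} (w : Fin k → EuclideanSpace ℝ (Fin d)) (y : Fin k)
    (h : EuclideanSpace ℝ (Fin d)) : ℝ :=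
  Real.log (∑ c : Fin k, Real.exp ⟪w c, h⟫) - 2 * ⟪w y, h⟫

/-- **Proposition 2 (alignment with ETF prototypes).** If the unit-norm prototypes
`w_1, …, w_k` form a simplex equiangular tight frame (`⟪w_c, w_{c'}⟫ = −1/(k−1)` for `c ≠ c'`),
then for every label `y` and every `h` with `‖h‖ ≤ 1`, `L_y(h) ≥ L_y(w_y)`: the prototype `w_y`
is a global minimizer of the limiting per-sample loss over the closed unit ball. -/
theorem etf_prototype_global_minimizer (d k : ℕ) (hd : 0 < d) (hk : 2 ≤ k)
    (w : Fin k → EuclideanSpace ℝ (Fin d)) (hw : ∀ c, ‖w c‖ = 1)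
    (hetf : ∀ c c' : Fin k, c ≠ c' → ⟪w c, w c'⟫ = -1 / ((k : ℝ) - 1)) :
    ∀ y : Fin k, ∀ h : EuclideanSpace ℝ (Fin d), ‖h‖ ≤ 1 →
      limitLoss w y h ≥ limitLoss w y (w y) := by
  intro y h hh
  set m : ℝ := (k : ℝ) - 1 with hm_def
  have hk1 : (2:ℝ) ≤ (k:ℝ) := by exact_mod_cast hk
  have hm1 : (1:ℝ) ≤ m := by simp only [hm_def]; linarith
  have hm0 : (0:ℝ) < m := by linarith
  -- cardinality of the erased set
  have hcard : ∀ c : Fin k, ((Finset.univ.erase c).card : ℝ) = m := by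
    intro c
    rw [Finset.card_erase_of_mem (Finset.mem_univ c), Finset.card_univ, Fintype.card_fin,
      Nat.cast_sub (by omega : 1 ≤ k)]
    simp [hm_def]
  have hself : ∀ c : Fin k, ⟪w c, w c⟫ = (1:ℝ) := by
    intro c
    rw [real_inner_self_eq_norm_sq, hw c]; norm_num
  -- the prototypes sum to zero
  have hSzero : ∑ c, w c = 0 := by
    rw [← inner_self_eq_zero (𝕜 := ℝ)]
    rw [sum_inner]
    have hinner : ∀ c : Fin k, ⟪w c, ∑ c', w c'⟫ = (0:ℝ) := by
      intro c
      rw [inner_sum, ← Finset.sum_erase_add _ _ (Finset.mem_univ c)]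
      have h1 : ∑ c' ∈ Finset.univ.erase c, ⟪w c, w c'⟫ = -1 := by
        rw [Finset.sum_congr rfl
          (fun c' hc' => hetf c c' (Ne.symm (Finset.ne_of_mem_erase hc')))]
        rw [Finset.sum_const, nsmul_eq_mul, hcard c]
        field_simp
      rw [h1, hself c]; ring
    rw [Finset.sum_congr rfl (fun c _ => hinner c), Finset.sum_const, smul_zero]
  have hsum0 : ∑ c, ⟪w c, h⟫ = (0:ℝ) := by
    rw [← sum_inner, hSzero, inner_zero_left]
  set s : ℝ := ⟪w y, h⟫ with hs_def
  have hs1 : s ≤ 1 := by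
    have h1 := real_inner_le_norm (w y) h
    rw [hw y, one_mul] at h1
    linarith
  -- tail sum of inner products
  have htail : ∑ c ∈ Finset.univ.erase y, ⟪w c, h⟫ = -s := by
    have h1 := Finset.sum_erase_add Finset.univ (fun c => ⟪w c, h⟫) (Finset.mem_univ y)
    simp only [hsum0] at h1
    linarith [h1]
  set t : ℝ := -s / m with ht_def
  have hmt : m * t = -s := by
    rw [ht_def]; field_simp
  -- tangent line bound on the tail sum of exponentials
  have htailexp : m * Real.exp t ≤ ∑ c ∈ Finset.univ.erase y, Real.exp ⟪w c, h⟫ := by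
    have hb : ∀ c ∈ Finset.univ.erase y,
        Real.exp t * (1 + (⟪w c, h⟫ - t)) ≤ Real.exp ⟪w c, h⟫ := by
      intro c _
      have h1 : (⟪w c, h⟫ - t) + 1 ≤ Real.exp (⟪w c, h⟫ - t) := Real.add_one_le_exp _
      have h2 : Real.exp t * ((⟪w c, h⟫ - t) + 1) ≤ Real.exp t * Real.exp (⟪w c, h⟫ - t) :=
        mul_le_mul_of_nonneg_left h1 (Real.exp_pos t).le
      rw [← Real.exp_add] at h2
      calc Real.exp t * (1 + (⟪w c, h⟫ - t)) = Real.exp t * ((⟪w c, h⟫ - t) + 1) := by ring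
        _ ≤ Real.exp (t + (⟪w c, h⟫ - t)) := h2
        _ = Real.exp ⟪w c, h⟫ := by ring_nf
    have hsumle := Finset.sum_le_sum hb
    have heq : ∑ c ∈ Finset.univ.erase y, Real.exp t * (1 + (⟪w c, h⟫ - t))
        = m * Real.exp t := by
      have : ∀ c : Fin k, Real.exp t * (1 + (⟪w c, h⟫ - t))
          = Real.exp t * (1 - t) + Real.exp t * ⟪w c, h⟫ := by intro c; ring
      rw [Finset.sum_congr rfl (fun c _ => this c), Finset.sum_add_distrib,
        Finset.sum_const, ← Finset.mul_sum, htail, nsmul_eq_mul, hcard y]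
      rw [← hmt]; ring
    rw [heq] at hsumle
    exact hsumle
  -- the value at the prototype
  have hB : ∑ c : Fin k, Real.exp ⟪w c, w y⟫ = Real.exp 1 + m * Real.exp (-1 / m) := by
    rw [← Finset.sum_erase_add _ _ (Finset.mem_univ y), hself y]
    have : ∑ c ∈ Finset.univ.erase y, Real.exp ⟪w c, w y⟫
        = m * Real.exp (-1 / m) := by
      rw [Finset.sum_congr rfl (fun c hc => by
        rw [hetf c y (Finset.ne_of_mem_erase hc)])]
      rw [Finset.sum_const, nsmul_eq_mul, hcard y]
    rw [this]; ring
  set B : ℝ := Real.exp 1 + m * Real.exp (-1 / m) with hB_def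
  have hBpos : 0 < B := by positivity
  -- main inequality on the sums
  set A : ℝ := ∑ c : Fin k, Real.exp ⟪w c, h⟫ with hA_def
  have hAsplit : A = Real.exp s + ∑ c ∈ Finset.univ.erase y, Real.exp ⟪w c, h⟫ := by
    rw [hA_def, ← Finset.sum_erase_add _ _ (Finset.mem_univ y)]; ring
  have hkey : Real.exp (2 * (s - 1)) * B ≤ A := by
    have e1 : Real.exp (2 * (s - 1)) * Real.exp 1 ≤ Real.exp s := by
      rw [← Real.exp_add]
      exact Real.exp_le_exp.2 (by linarith)
    have e2 : Real.exp (2 * (s - 1)) * (m * Real.exp (-1 / m)) ≤ m * Real.exp t := by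
      rw [show Real.exp (2 * (s - 1)) * (m * Real.exp (-1 / m))
          = m * (Real.exp (2 * (s - 1)) * Real.exp (-1 / m)) by ring, ← Real.exp_add]
      apply mul_le_mul_of_nonneg_left _ hm0.le
      apply Real.exp_le_exp.2
      rw [ht_def]
      have h3 : (2 * (s - 1) + -1 / m) - (-s / m) = (s - 1) * (1 / m + 2) := by
        field_simp; ring
      have h4 : (s - 1) * (1 / m + 2) ≤ 0 :=
        mul_nonpos_of_nonpos_of_nonneg (by linarith) (by positivity)
      linarith
    calc Real.exp (2 * (s - 1)) * B
        = Real.exp (2 * (s - 1)) * Real.exp 1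
          + Real.exp (2 * (s - 1)) * (m * Real.exp (-1 / m)) := by rw [hB_def]; ring
      _ ≤ Real.exp s + m * Real.exp t := add_le_add e1 e2
      _ ≤ Real.exp s + ∑ c ∈ Finset.univ.erase y, Real.exp ⟪w c, h⟫ := by linarith
      _ = A := hAsplit.symm
  have hlog : 2 * (s - 1) + Real.log B ≤ Real.log A := by
    have h1 : Real.log (Real.exp (2 * (s - 1)) * B) ≤ Real.log A :=
      Real.log_le_log (by positivity) hkey
    rwa [Real.log_mul (Real.exp_ne_zero _) hBpos.ne', Real.log_exp] at h1
  have hLproto : limitLoss w y (w y) = Real.log B - 2 := by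
    rw [limitLoss, hB, hself y]; ring
  rw [hLproto]
  show Real.log A - 2 * s ≥ Real.log B - 2
  linarith
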